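/- Let n = 2p + 1 ≥ 3 be odd and let e be any edge of the complete graph K_n. Then a_{p+1}(K_n \ e) < C(n, p+1) = a_{p+1}(K_n); in particular a(K_n \ e; x) ≠ a(K_n; x). -/

import Mathlib

open SimpleGraph Polynomial Finset

/-- `δ_S(v)`: the number of neighbors of `v` lying in the set `S`. -/
noncomputable def degIn {V : Type*} (G : SimpleGraph V) (S : Finset V) (v : V) : ℕ :=
  ((S : Set V) ∩ G.neighborSet v).ncard

/-- `δ(v)`: the degree of `v` in `G`. -/
noncomputable def degOf {V : Type*} (G : SimpleGraph V) (v : V) : ℕ :=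
  (G.neighborSet v).ncard

/-- `S` is a strong defensive alliance in `G`: `S` is nonempty and every `v ∈ S`
satisfies `2·δ_S(v) ≥ δ(v)`. -/
def IsStrongAlliance {V : Type*} (G : SimpleGraph V) (S : Finset V) : Prop :=
  S.Nonempty ∧ ∀ v ∈ S, degOf G v ≤ 2 * degIn G S v

/-- The alliances counted by the strong alliance polynomial: strong defensive alliances
whose induced subgraph is connected. -/
def IsCountedAlliance {V : Type*} (G : SimpleGraph V) (S : Finset V) : Prop :=
  IsStrongAlliance G S ∧ (G.induce (S : Set V)).Connected

/-- `a_k(G)`: the number of strong defensive alliances of cardinality `k` in `G`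
whose induced subgraph is connected. -/
noncomputable def aCoeff {V : Type*} (G : SimpleGraph V) (k : ℕ) : ℕ :=
  {S : Finset V | S.card = k ∧ IsCountedAlliance G S}.ncard

/-- The strong alliance polynomial `a(G;x) = Σ_k a_k(G) x^k`. -/
noncomputable def alliancePoly {V : Type*} [Fintype V] (G : SimpleGraph V) : Polynomial ℤ :=
  ∑ k ∈ Finset.range (Fintype.card V + 1), Polynomial.C (aCoeff G k : ℤ) * Polynomial.X ^ k

section Aux

variable {V : Type*}

lemma induce_top_connected [Fintype V] (S : Finset V) (hS : S.Nonempty) :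
    ((⊤ : SimpleGraph V).induce (S : Set V)).Connected := by
  have : Nonempty (S : Set V) := (by exact_mod_cast hS : (S : Set V).Nonempty).to_subtype
  have heq : (⊤ : SimpleGraph V).induce (S : Set V) = ⊤ := by
    ext x y
    simp [Subtype.coe_injective.ne_iff]
  rw [heq]
  exact SimpleGraph.connected_top

lemma degOf_top [Fintype V] [DecidableEq V] (v : V) :
    degOf (⊤ : SimpleGraph V) v = Fintype.card V - 1 := by
  have h : (⊤ : SimpleGraph V).neighborSet v = ↑(Finset.univ.erase v) := by
    ext w
    simp [SimpleGraph.neighborSet, eq_comm]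
  rw [degOf, h, Set.ncard_coe_finset, Finset.card_erase_of_mem (Finset.mem_univ v),
    Finset.card_univ]

lemma degIn_top [Fintype V] [DecidableEq V] (S : Finset V) (v : V) (hv : v ∈ S) :
    degIn (⊤ : SimpleGraph V) S v = S.card - 1 := by
  have h : (S : Set V) ∩ (⊤ : SimpleGraph V).neighborSet v = ↑(S.erase v) := by
    ext w
    simp [SimpleGraph.neighborSet, eq_comm, and_comm]
  rw [degIn, h, Set.ncard_coe_finset, Finset.card_erase_of_mem hv]

end Aux

/-- Let `n = 2p + 1 ≥ 3` be odd and let `e` be any edge of the complete graph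
`K_n`.  Then `a_{p+1}(K_n \ e) < C(n, p+1) = a_{p+1}(K_n)`; in particular
`a(K_n \ e; x) ≠ a(K_n; x)`. -/
theorem stmt_17 (p : ℕ) (hp : 1 ≤ p) (e : Sym2 (Fin (2 * p + 1)))
    (he : e ∈ (⊤ : SimpleGraph (Fin (2 * p + 1))).edgeSet) :
    aCoeff ((⊤ : SimpleGraph (Fin (2 * p + 1))).deleteEdges {e}) (p + 1) <
        (2 * p + 1).choose (p + 1) ∧
    aCoeff (⊤ : SimpleGraph (Fin (2 * p + 1))) (p + 1) = (2 * p + 1).choose (p + 1) ∧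
    alliancePoly ((⊤ : SimpleGraph (Fin (2 * p + 1))).deleteEdges {e}) ≠
      alliancePoly (⊤ : SimpleGraph (Fin (2 * p + 1))) := by
  induction e using Sym2.ind with
  | _ a b =>
  have hab : a ≠ b := by simpa using he
  set G : SimpleGraph (Fin (2 * p + 1)) :=
    (⊤ : SimpleGraph (Fin (2 * p + 1))).deleteEdges {s(a, b)} with hG
  have hcardV : Fintype.card (Fin (2 * p + 1)) = 2 * p + 1 := by simp
  -- a_{p+1}(K_n) = C(n, p+1)
  have htop : aCoeff (⊤ : SimpleGraph (Fin (2 * p + 1))) (p + 1)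
      = (2 * p + 1).choose (p + 1) := by
    have hset : {S : Finset (Fin (2 * p + 1)) | S.card = p + 1 ∧ IsCountedAlliance ⊤ S}
        = ↑(Finset.powersetCard (p + 1) (Finset.univ : Finset (Fin (2 * p + 1)))) := by
      ext S
      simp only [Set.mem_setOf_eq, Finset.mem_coe, Finset.mem_powersetCard_univ]
      constructor
      · rintro ⟨h, -⟩; exact h
      · intro h
        have hne : S.Nonempty := Finset.card_pos.mp (by omega)
        refine ⟨h, ⟨hne, ?_⟩, induce_top_connected S hne⟩
        intro v hv
        rw [degOf_top, degIn_top S v hv, hcardV, h]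
        omega
    rw [aCoeff, hset, Set.ncard_coe_finset, Finset.card_powersetCard, Finset.card_univ, hcardV]
  -- the bad set S₀ containing both a and b
  obtain ⟨S₀, hsub, -, hcard⟩ := Finset.exists_subsuperset_card_eq (n := p + 1)
    (Finset.subset_univ ({a, b} : Finset (Fin (2 * p + 1))))
    (by rw [Finset.card_pair hab]; omega)
    (by rw [Finset.card_univ, hcardV]; omega)
  have haS : a ∈ S₀ := hsub (by simp)
  -- neighbor set of a in G
  have hnbr : G.neighborSet a = ↑(Finset.univ \ {a, b} : Finset (Fin (2 * p + 1))) := by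
    ext w
    simp only [SimpleGraph.mem_neighborSet, hG, SimpleGraph.deleteEdges_adj,
      SimpleGraph.top_adj, Set.mem_singleton_iff, Sym2.congr_right, Finset.coe_sdiff,
      Finset.coe_univ, Set.mem_diff, Set.mem_univ, true_and, Finset.coe_insert,
      Finset.coe_singleton, Set.mem_insert_iff, Set.mem_singleton_iff, not_or,
      Finset.mem_coe, Finset.mem_sdiff, Finset.mem_univ, Finset.mem_insert,
      Finset.mem_singleton]
    tauto
  have hdegOf : degOf G a = 2 * p - 1 := by
    rw [degOf, hnbr, Set.ncard_coe_finset,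
      Finset.card_sdiff_of_subset (Finset.subset_univ _), Finset.card_pair hab,
      Finset.card_univ, hcardV]
    omega
  have hdegIn : degIn G S₀ a = p - 1 := by
    have h : (S₀ : Set (Fin (2 * p + 1))) ∩ G.neighborSet a
        = ↑(S₀ \ {a, b} : Finset (Fin (2 * p + 1))) := by
      rw [hnbr]
      ext w
      simp only [Set.mem_inter_iff, Finset.coe_sdiff, Finset.coe_univ, Set.mem_diff,
        Set.mem_univ, true_and, Finset.mem_coe, Finset.mem_sdiff]
    rw [degIn, h, Set.ncard_coe_finset, Finset.card_sdiff_of_subset hsub, Finset.card_pair hab, hcard]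
    omega
  -- S₀ is not a counted alliance in G
  have hS0 : ¬ IsCountedAlliance G S₀ := by
    rintro ⟨⟨-, hall⟩, -⟩
    have := hall a haS
    rw [hdegOf, hdegIn] at this
    omega
  -- strict inequality
  have hlt : aCoeff G (p + 1) < (2 * p + 1).choose (p + 1) := by
    have hssub : {S : Finset (Fin (2 * p + 1)) | S.card = p + 1 ∧ IsCountedAlliance G S}
        ⊂ ↑(Finset.powersetCard (p + 1) (Finset.univ : Finset (Fin (2 * p + 1)))) := by
      constructor
      · intro S hS
        simp only [Set.mem_setOf_eq, Finset.mem_coe, Finset.mem_powersetCard_univ] at *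
        exact hS.1
      · intro hsub'
        have hmem : S₀ ∈ {S : Finset (Fin (2 * p + 1)) | S.card = p + 1 ∧
            IsCountedAlliance G S} := by
          apply hsub'
          simp only [Finset.mem_coe, Finset.mem_powersetCard_univ]
          exact hcard
        exact hS0 hmem.2
    have hfin := Set.ncard_lt_ncard hssub (Set.toFinite _)
    rw [Set.ncard_coe_finset, Finset.card_powersetCard, Finset.card_univ, hcardV] at hfin
    exact hfin
  refine ⟨hlt, htop, ?_⟩
  -- polynomials differ since coefficients at p+1 differ
  intro heq
  have hcoeff : ∀ (H : SimpleGraph (Fin (2 * p + 1))),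
      (alliancePoly H).coeff (p + 1) = (aCoeff H (p + 1) : ℤ) := by
    intro H
    rw [alliancePoly, Polynomial.finset_sum_coeff]
    rw [Finset.sum_eq_single (p + 1)]
    · simp
    · intro k hk hne
      simp [Polynomial.coeff_X_pow, (Ne.symm hne)]
    · intro h
      exact absurd (Finset.mem_range.mpr (by rw [hcardV]; omega)) h
  have h2 := congrArg (fun q => q.coeff (p + 1)) heq
  simp only [hcoeff] at h2
  have h3 : aCoeff G (p + 1) = aCoeff (⊤ : SimpleGraph (Fin (2 * p + 1))) (p + 1) := by
    exact_mod_cast h2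
  omega
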